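/- (Rodrigues formula) For all natural numbers m and n and all real x, H_{m,n}(x) = (−1)^m · e^{x²} · (d^m/dx^m)(x^n · e^{−x²}), where the m-th derivative is the iterated derivative of the real function t ↦ t^n·e^{−t²} evaluated at x. -/

import Mathlib

open Polynomial Finset

/-- The operator `A p = 2·X·p − p′`. -/
noncomputable def A (p : ℝ[X]) : ℝ[X] := 2 * X * p - derivative p

/-- The two-index Hermite polynomial `H_{m,n} = A^m (X^n)`. -/
noncomputable def H (m n : ℕ) : ℝ[X] := A^[m] (X ^ n)

lemma deriv_aux (p : ℝ[X]) :
    deriv (fun t : ℝ => p.eval t * Real.exp (-t ^ 2)) =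
      fun t : ℝ => -((A p).eval t * Real.exp (-t ^ 2)) := by
  funext t
  have h1 : HasDerivAt (fun t : ℝ => p.eval t) ((derivative p).eval t) t :=
    p.hasDerivAt t
  have h2 : HasDerivAt (fun t : ℝ => Real.exp (-t ^ 2))
      (Real.exp (-t ^ 2) * (-(2 * t))) t := by
    have : HasDerivAt (fun t : ℝ => -t ^ 2) (-(2 * t)) t := by
      simpa using ((hasDerivAt_pow 2 t).fun_neg)
    simpa using this.exp
  have := (h1.fun_mul h2).deriv
  rw [this]
  simp [A]
  ring

lemma key (m : ℕ) : ∀ (p : ℝ[X]) (x : ℝ),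
    iteratedDeriv m (fun t : ℝ => p.eval t * Real.exp (-t ^ 2)) x =
      (-1 : ℝ) ^ m * (A^[m] p).eval x * Real.exp (-x ^ 2) := by
  induction m with
  | zero => intro p x; simp
  | succ m ih =>
    intro p x
    rw [iteratedDeriv_succ', deriv_aux]
    have : iteratedDeriv m (fun t : ℝ => -((A p).eval t * Real.exp (-t ^ 2))) x
        = -iteratedDeriv m (fun t : ℝ => (A p).eval t * Real.exp (-t ^ 2)) x := by
      rw [iteratedDeriv_fun_neg]
    rw [this, ih (A p) x, Function.iterate_succ_apply]
    ring

theorem hmn_rodrigues (m n : ℕ) (x : ℝ) :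
    (H m n).eval x =
      (-1 : ℝ) ^ m * Real.exp (x ^ 2) *
        iteratedDeriv m (fun t : ℝ => t ^ n * Real.exp (-t ^ 2)) x := by
  have h : (fun t : ℝ => t ^ n * Real.exp (-t ^ 2)) =
      fun t : ℝ => (X ^ n : ℝ[X]).eval t * Real.exp (-t ^ 2) := by
    funext t; simp
  rw [h, key m (X ^ n) x, H]
  have he : Real.exp (x ^ 2) * Real.exp (-x ^ 2) = 1 := by
    rw [← Real.exp_add]; simp
  have hs : ((-1 : ℝ) ^ m) * ((-1 : ℝ) ^ m) = 1 := by
    rw [← pow_add]; simp [pow_mul, ← two_mul]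
  linear_combination (-(eval x (A^[m] (X ^ n))) * (Real.exp (x ^ 2) * Real.exp (-x ^ 2))) * hs
    + (-(eval x (A^[m] (X ^ n)))) * he
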